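/- Let {B_t} be a non-negative real sequence and p, q > 0 be reals such that B_{t+1} ≤ B_t − q·B_{t+1}^{p+1} for all t ≥ 1, and q(1+p)·B_1^p ≤ 1. Then for all t ≥ 1, B_t ≤ c·t^{−1/p}, where c = max{B_1, (2/(q p))^{1/p}}. -/

import Mathlib

open Real

lemma aux_ineq (p x : ℝ) (hp : 0 < p) (hx : 0 ≤ x) (hpx : x * (1 + p) ≤ 1) :
    (1 + x) ^ (-p) ≤ 1 - p * x / 2 := by
  have h1x : (0:ℝ) < 1 + x := by linarith
  rcases le_or_gt p 1 with hp1 | hp1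
  · -- p ≤ 1 : use (1-y)^p ≤ 1 - p y with y = x/(1+x)
    have hx1 : x ≤ 1 := by nlinarith
    set y := x / (1 + x) with hy
    have hy0 : 0 ≤ y := div_nonneg hx h1x.le
    have hy1 : y < 1 := by rw [hy, div_lt_one h1x]; linarith
    have hber : (1 + (-y)) ^ p ≤ 1 + p * (-y) :=
      rpow_one_add_le_one_add_mul_self (by linarith) hp.le hp1
    have heq : 1 + (-y) = (1 + x)⁻¹ := by
      field_simp [hy]
      rw [hy]; field_simp; ring
    have h2 : (1 + x) ^ (-p) = (1 + (-y)) ^ p := by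
      rw [heq, ← rpow_neg_one (1+x), ← rpow_mul h1x.le]
      ring_nf
    rw [h2]
    have : x / 2 ≤ y := by
      rw [hy, le_div_iff₀ h1x]; nlinarith
    nlinarith
  · -- p > 1 : (1+x)^p ≥ 1 + p x
    have hber : 1 + p * x ≤ (1 + x) ^ p :=
      one_add_mul_self_le_rpow_one_add (by linarith) hp1.le
    have hpx1 : p * x ≤ 1 := by nlinarith
    have hpos : (0:ℝ) < 1 + p * x := by nlinarith
    have h1 : (1 + x) ^ (-p) ≤ (1 + p * x)⁻¹ := by
      rw [rpow_neg h1x.le]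
      exact inv_anti₀ hpos hber
    have h2 : (1 + p * x)⁻¹ ≤ 1 - p * x / 2 := by
      rw [inv_le_iff_one_le_mul₀ hpos]
      nlinarith [mul_nonneg (mul_nonneg hp.le hx) (sub_nonneg.2 hpx1)]
    linarith


/-- Recursion lemma: a non-negative sequence satisfying
`B (t+1) ≤ B t - q * B (t+1) ^ (p+1)` with `q * (1+p) * B 1 ^ p ≤ 1`
decays like `t ^ (-1/p)` with constant `c = max (B 1) ((2/(q*p))^(1/p))`. -/
theorem stmt0 (B : ℕ → ℝ) (p q : ℝ) (hp : 0 < p) (hq : 0 < q)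
    (hB : ∀ t, 0 ≤ B t)
    (hrec : ∀ t ≥ 1, B (t + 1) ≤ B t - q * B (t + 1) ^ (p + 1))
    (hinit : q * (1 + p) * B 1 ^ p ≤ 1) :
    ∀ t ≥ 1, B t ≤ max (B 1) ((2 / (q * p)) ^ (1 / p)) * (t : ℝ) ^ (-(1 / p)) := by
  set c := max (B 1) ((2 / (q * p)) ^ (1 / p)) with hc
  have hqp : 0 < q * p := mul_pos hq hp
  have h2qp : (0:ℝ) < 2 / (q * p) := by positivity
  have hcpos : 0 < c := lt_max_of_lt_right (rpow_pos_of_pos h2qp _)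
  have hcp : 2 / (q * p) ≤ c ^ p := by
    calc 2 / (q*p) = ((2/(q*p)) ^ (1/p)) ^ p := by
          rw [← rpow_mul h2qp.le, one_div_mul_cancel hp.ne', rpow_one]
      _ ≤ c ^ p := rpow_le_rpow (rpow_nonneg h2qp.le _) (le_max_right _ _) hp.le
  have hcppos : 0 < c ^ p := rpow_pos_of_pos hcpos p
  have hmono : ∀ t, 1 ≤ t → B (t+1) ≤ B t := by
    intro t ht
    have h := hrec t ht
    nlinarith [rpow_nonneg (hB (t+1)) (p+1), hq.le,
      mul_nonneg hq.le (rpow_nonneg (hB (t+1)) (p+1))]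
  have hBle1 : ∀ t, 1 ≤ t → B t ≤ B 1 := by
    intro t ht
    induction t, ht using Nat.le_induction with
    | base => exact le_refl _
    | succ n hn ih => exact (hmono n hn).trans ih
  have key : ∀ t : ℕ, 1 ≤ t → (t:ℝ) * B t ^ p ≤ c ^ p := by
    intro t ht
    induction t, ht using Nat.le_induction with
    | base =>
      simp only [Nat.cast_one, one_mul]
      exact rpow_le_rpow (hB 1) (le_max_left _ _) hp.le
    | succ n hn ih =>
      by_cases hb : B (n+1) = 0
      · rw [hb, zero_rpow hp.ne', mul_zero]; exact hcppos.le
      have hbpos : 0 < B (n+1) := (hB _).lt_of_ne (Ne.symm hb)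
      have hapos : 0 < B n := hbpos.trans_le (hmono n hn)
      set b := B (n+1) with hbdef
      set x := q * b ^ p with hxdef
      have hbp : 0 < b ^ p := rpow_pos_of_pos hbpos p
      have hxpos : 0 < x := mul_pos hq hbp
      have hble1 : b ≤ B 1 := hBle1 (n+1) (by omega)
      have hxb : x * (1 + p) ≤ 1 := by
        have h1 : b ^ p ≤ B 1 ^ p := rpow_le_rpow hbpos.le hble1 hp.le
        nlinarith [hq.le]
      have haux := aux_ineq p x hp hxpos.le hxb
      have hrec' : b * (1 + x) ≤ B n := by
        have h := hrec n hn
        have hbp1 : b ^ (p+1) = b ^ p * b := by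
          rw [rpow_add hbpos, rpow_one]
        rw [← hbdef] at h
        nlinarith [hbp1]
      have hbx : 0 < b * (1+x) := by positivity
      have h1 : B n ^ (-p) ≤ (b*(1+x)) ^ (-p) :=
        rpow_le_rpow_of_nonpos hbx hrec' (neg_nonpos.2 hp.le)
      have h2 : (b*(1+x)) ^ (-p) = b ^ (-p) * (1+x) ^ (-p) :=
        mul_rpow hbpos.le (by positivity)
      have h3 : b ^ p * b ^ (-p) = 1 := by
        rw [← rpow_add hbpos]; simp
      have h4 : B n ^ (-p) ≤ b ^ (-p) - p * q / 2 := by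
        have hm := mul_le_mul_of_nonneg_left haux (rpow_nonneg hbpos.le (-p))
        have heq : b^(-p) * (1 - p*x/2) = b^(-p) - p*q/2 := by
          rw [hxdef]; nlinarith [h3]
        calc B n ^ (-p) ≤ b^(-p) * (1+x)^(-p) := by rw [← h2]; exact h1
          _ ≤ b^(-p) * (1 - p*x/2) := hm
          _ = b^(-p) - p*q/2 := heq
      have hanp : 0 < B n ^ p := rpow_pos_of_pos hapos p
      have hainv : B n ^ (-p) = (B n ^ p)⁻¹ := by rw [rpow_neg hapos.le]
      have hbinv : b ^ (-p) = (b ^ p)⁻¹ := by rw [rpow_neg hbpos.le]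
      have h5 : (n:ℝ) / c ^ p ≤ B n ^ (-p) := by
        rw [hainv, ← one_div, div_le_div_iff₀ hcppos hanp]
        linarith [ih]
      have h6 : 1 / c ^ p ≤ p * q / 2 := by
        rw [div_le_iff₀ hcppos]
        have h7 := (div_le_iff₀ hqp).mp hcp
        nlinarith
      have h8 : ((n:ℝ)+1) / c ^ p ≤ b ^ (-p) := by
        have : ((n:ℝ)+1) / c^p = (n:ℝ)/c^p + 1/c^p := by ring
        linarith [h4, h5, h6, this]
      rw [hbinv] at h8
      push_cast
      rw [← one_div, div_le_div_iff₀ hcppos hbp] at h8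
      linarith [h8]
  intro t ht
  have h := key t ht
  have htpos : (0:ℝ) < t := by exact_mod_cast Nat.lt_of_lt_of_le Nat.zero_lt_one ht
  have h1 : B t ^ p ≤ c ^ p / t := by
    rw [le_div_iff₀ htpos]; linarith [h]
  have h2 : B t = (B t ^ p) ^ (1/p) := by
    rw [← rpow_mul (hB t), mul_one_div, div_self hp.ne', rpow_one]
  rw [h2]
  calc (B t ^ p)^(1/p) ≤ (c^p / t)^(1/p) :=
        rpow_le_rpow (rpow_nonneg (hB t) p) h1 (by positivity)
    _ = c * (t:ℝ) ^ (-(1/p)) := by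
        rw [div_rpow (rpow_nonneg hcpos.le p) htpos.le, ← rpow_mul hcpos.le,
          mul_one_div, div_self hp.ne', rpow_one, rpow_neg htpos.le, div_eq_mul_inv]
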